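/- Let q(Z,S,X) be square-integrable with E[q(Z,S,X) | W, S, X, G=O] = f(W,S | A=a, X, G=E) f(X | G=E) / f(W,S,X | G=O) a.s. Then for any bounded measurable function m(W,S,X), E[q(Z,S,X) · m(W,S,X) | G=O] = E[m(W,S,X) | A=a, G=E]. -/

import Mathlib

open MeasureTheory ProbabilityTheory
open scoped ENNReal NNReal

/-- **Reweighting property of the surrogate bridge.** Let `G ∈ {E,O}`
(`true = E`, `false = O`) and `A` be the binary treatment. Suppose the law of `(W,S,X)`
under the observational sample (`G = O`) has density `pO` (positive a.e.) and the law of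
`(W,S,X)` under the target sample (`A = a, G = E`) has density `pE`, both with respect to a
common dominating σ-finite measure `ν`. If `q(Z,S,X)` is square-integrable with
`E[q | W,S,X, G=O] = pE(W,S,X)/pO(W,S,X)` a.s. (the density ratio
`f(W,S | A=a, X, G=E) f(X | G=E) / f(W,S,X | G=O)`), then for any bounded measurable
`m(W,S,X)`: `E[q(Z,S,X) · m(W,S,X) | G=O] = E[m(W,S,X) | A=a, G=E]`. -/
theorem surrogate_bridge_reweighting
    {Ω 𝒲 𝒮 𝒳 𝒵 : Type*} {mΩ : MeasurableSpace Ω}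
    [MeasurableSpace 𝒲] [MeasurableSpace 𝒮] [MeasurableSpace 𝒳] [MeasurableSpace 𝒵]
    (μ : Measure Ω) [IsProbabilityMeasure μ]
    (W : Ω → 𝒲) (S : Ω → 𝒮) (X : Ω → 𝒳) (Z : Ω → 𝒵) (A G : Ω → Bool) (a : Bool)
    (hW : Measurable W) (hS : Measurable S) (hX : Measurable X) (hZ : Measurable Z)
    (hA : Measurable A) (hG : Measurable G)
    (hO : 0 < μ {ω | G ω = false}) (hEa : 0 < μ {ω | A ω = a ∧ G ω = true})
    (ν : Measure (𝒲 × 𝒮 × 𝒳)) [SigmaFinite ν]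
    (pO pE : 𝒲 × 𝒮 × 𝒳 → ℝ) (hpOmeas : Measurable pO) (hpEmeas : Measurable pE)
    (hpOdens : Measure.map (fun ω => (W ω, S ω, X ω)) (μ[|{ω | G ω = false}])
      = ν.withDensity (fun v => ENNReal.ofReal (pO v)))
    (hpEdens : Measure.map (fun ω => (W ω, S ω, X ω)) (μ[|{ω | A ω = a ∧ G ω = true}])
      = ν.withDensity (fun v => ENNReal.ofReal (pE v)))
    (hpOpos : ∀ᵐ v ∂ν, 0 < pO v) (hpEnn : ∀ v, 0 ≤ pE v)
    (mWSX : MeasurableSpace Ω)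
    (hWSXdef : mWSX = MeasurableSpace.comap (fun ω => (W ω, S ω, X ω)) inferInstance)
    (hWSXle : mWSX ≤ mΩ)
    (q : Ω → ℝ) (hq2 : MemLp q 2 (μ[|{ω | G ω = false}]))
    (hbridge : (μ[|{ω | G ω = false}])[q | mWSX]
      =ᵐ[μ[|{ω | G ω = false}]]
      fun ω => pE (W ω, S ω, X ω) / pO (W ω, S ω, X ω))
    (m : 𝒲 × 𝒮 × 𝒳 → ℝ) (hmmeas : Measurable m) (hmbdd : ∃ C, ∀ v, |m v| ≤ C) :
    ∫ ω, q ω * m (W ω, S ω, X ω) ∂(μ[|{ω | G ω = false}])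
      = ∫ ω, m (W ω, S ω, X ω) ∂(μ[|{ω | A ω = a ∧ G ω = true}]) := by
  obtain ⟨C, hC⟩ := hmbdd
  set T : Ω → 𝒲 × 𝒮 × 𝒳 := fun ω => (W ω, S ω, X ω) with hTdef
  have hTmeas : Measurable[mΩ] T := hW.prodMk (hS.prodMk hX)
  have hsO : MeasurableSet[mΩ] {ω | G ω = false} := hG (measurableSet_singleton false)
  have hsE : MeasurableSet[mΩ] {ω | A ω = a ∧ G ω = true} := by
    have : {ω | A ω = a ∧ G ω = true} = A ⁻¹' {a} ∩ G ⁻¹' {true} := by ext ω; simp [Set.mem_inter_iff]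
    rw [this]
    exact (hA (measurableSet_singleton a)).inter (hG (measurableSet_singleton true))
  set μO := μ[|{ω | G ω = false}] with hμO
  set μE := μ[|{ω | A ω = a ∧ G ω = true}] with hμE
  haveI : IsProbabilityMeasure μO := cond_isProbabilityMeasure hO.ne'
  haveI : IsProbabilityMeasure μE := cond_isProbabilityMeasure hEa.ne'
  have hqint : Integrable q μO := hq2.integrable one_le_two
  have hmT_sm : StronglyMeasurable[mWSX] (fun ω => m (T ω)) := by
    rw [hWSXdef]
    exact (hmmeas.comp (Measurable.of_comap_le le_rfl)).stronglyMeasurable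
  have hprod_int : Integrable (fun ω => m (T ω) * q ω) μO :=
    hqint.bdd_mul (((hmmeas.comp hTmeas).aestronglyMeasurable :
        AEStronglyMeasurable[mΩ] (fun ω => m (T ω)) μO)) (ae_of_all _ fun ω => by
      simpa [Real.norm_eq_abs] using hC (T ω))
  have hpull : μO[(fun ω => m (T ω)) * q | mWSX] =ᵐ[μO] (fun ω => m (T ω)) * μO[q | mWSX] :=
    condExp_mul_of_stronglyMeasurable_left hmT_sm hprod_int hqint
  have hLHS : ∫ ω, q ω * m (T ω) ∂μO = ∫ ω, m (T ω) * (pE (T ω) / pO (T ω)) ∂μO := by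
    calc ∫ ω, q ω * m (T ω) ∂μO = ∫ ω, ((fun ω => m (T ω)) * q) ω ∂μO := by
          simp [mul_comm]
      _ = ∫ ω, (μO[(fun ω => m (T ω)) * q | mWSX]) ω ∂μO :=
          (integral_condExp hWSXle).symm
      _ = ∫ ω, m (T ω) * (pE (T ω) / pO (T ω)) ∂μO := by
          refine integral_congr_ae (hpull.trans ?_)
          filter_upwards [hbridge] with ω hω
          simp only [Pi.mul_apply]
          rw [hω]
  rw [hLHS]
  have hmap1 := integral_map (μ := μO) (hTmeas.aemeasurable : AEMeasurable T μO)
    (f := fun v => m v * (pE v / pO v))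
    ((hmmeas.mul (hpEmeas.div hpOmeas)).aestronglyMeasurable)
  have hmap2 := integral_map (μ := μE) (hTmeas.aemeasurable : AEMeasurable T μE)
    (f := m) hmmeas.aestronglyMeasurable
  rw [← hmap1, ← hmap2, hpOdens, hpEdens]
  have hcoe : ∀ p : 𝒲 × 𝒮 × 𝒳 → ℝ, (fun v => ENNReal.ofReal (p v))
      = fun v => ((fun v => (p v).toNNReal) v : ℝ≥0∞) := fun p => rfl
  rw [hcoe pO, hcoe pE,
    integral_withDensity_eq_integral_smul hpOmeas.real_toNNReal,
    integral_withDensity_eq_integral_smul hpEmeas.real_toNNReal]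
  refine integral_congr_ae ?_
  filter_upwards [hpOpos] with v hv
  have h1 : ((pO v).toNNReal : ℝ) = pO v := Real.coe_toNNReal _ hv.le
  have h2 : ((pE v).toNNReal : ℝ) = pE v := Real.coe_toNNReal _ (hpEnn v)
  simp only [NNReal.smul_def, smul_eq_mul, h1, h2]
  field_simp
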